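/- Let M : ℝ → ℝ^{m×n} be a matrix-valued function differentiable at θ₀ with M(θ₀) of full column rank n, and let u ∈ ℝ^m. Define P(θ) = M(θ)(M(θ)ᵀM(θ))⁻¹M(θ)ᵀ (well-defined in a neighborhood of θ₀). Then θ ↦ ‖P(θ)u‖² is differentiable at θ₀ and its derivative equals 2·uᵀ (I_m − P(θ₀)) M′(θ₀) (M(θ₀)ᵀM(θ₀))⁻¹ M(θ₀)ᵀ u, where M′(θ₀) is the entrywise derivative of M at θ₀. -/

import Mathlib

open Matrix

section Helpers

variable {θ₀ : ℝ}

/-- Entrywise derivative of a matrix product. -/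
theorem hd_mul {a b c : ℕ} {F : ℝ → Matrix (Fin a) (Fin b) ℝ}
    {G : ℝ → Matrix (Fin b) (Fin c) ℝ} {F' : Matrix (Fin a) (Fin b) ℝ}
    {G' : Matrix (Fin b) (Fin c) ℝ}
    (hF : ∀ i j, HasDerivAt (fun θ => F θ i j) (F' i j) θ₀)
    (hG : ∀ i j, HasDerivAt (fun θ => G θ i j) (G' i j) θ₀) :
    ∀ i j, HasDerivAt (fun θ => (F θ * G θ) i j)
      ((F' * G θ₀ + F θ₀ * G') i j) θ₀ := by
  intro i j
  simp only [Matrix.mul_apply, Matrix.add_apply, ← Finset.sum_add_distrib]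
  exact HasDerivAt.fun_sum fun k _ => (hF i k).mul (hG k j)

theorem differentiableAt_det {k : ℕ} {B : ℝ → Matrix (Fin k) (Fin k) ℝ}
    (hB : ∀ i j, DifferentiableAt ℝ (fun θ => B θ i j) θ₀) :
    DifferentiableAt ℝ (fun θ => (B θ).det) θ₀ := by
  simp only [Matrix.det_apply, Units.smul_def, zsmul_eq_mul]
  refine DifferentiableAt.fun_sum fun σ _ => DifferentiableAt.const_mul ?_ _
  have := (HasFDerivAt.finset_prod (u := (Finset.univ : Finset (Fin k)))
    (g := fun i θ => B θ (σ i) i)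
    (g' := fun i => fderiv ℝ (fun θ => B θ (σ i) i) θ₀) (x := θ₀)
    (fun i _ => (hB (σ i) i).hasFDerivAt)).differentiableAt
  simpa using this

theorem differentiableAt_inv_entry {k : ℕ} {B : ℝ → Matrix (Fin k) (Fin k) ℝ}
    (hB : ∀ i j, DifferentiableAt ℝ (fun θ => B θ i j) θ₀)
    (hdet : (B θ₀).det ≠ 0) :
    ∀ i j, DifferentiableAt ℝ (fun θ => (B θ)⁻¹ i j) θ₀ := by
  intro i j
  have heq : (fun θ => (B θ)⁻¹ i j)
      = fun θ => ((B θ).det)⁻¹ * ((B θ).updateRow j (Pi.single i 1)).det := by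
    funext θ
    rw [Matrix.inv_def, Matrix.smul_apply, Matrix.adjugate_apply, smul_eq_mul,
      Ring.inverse_eq_inv']
  rw [heq]
  refine DifferentiableAt.mul (DifferentiableAt.inv (differentiableAt_det hB) hdet) ?_
  refine differentiableAt_det fun a b => ?_
  by_cases hab : a = j
  · simp only [hab, Matrix.updateRow_self]
    exact differentiableAt_const _
  · simp only [Matrix.updateRow_ne hab]
    exact hB a b

theorem isUnit_of_rank_eq {k : ℕ} (A : Matrix (Fin k) (Fin k) ℝ) (h : A.rank = k) :
    IsUnit A := by
  rw [Matrix.rank] at h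
  have htop : LinearMap.range A.mulVecLin = ⊤ :=
    Submodule.eq_top_of_finrank_eq (by simpa using h)
  refine Matrix.mulVec_surjective_iff_isUnit.mp fun v => ?_
  obtain ⟨w, hw⟩ := LinearMap.range_eq_top.mp htop v
  exact ⟨w, hw⟩

theorem dot_gram {a b : ℕ} (X : Matrix (Fin a) (Fin b) ℝ) (u : Fin b → ℝ) :
    u ⬝ᵥ (Xᵀ * X).mulVec u = X.mulVec u ⬝ᵥ X.mulVec u := by
  rw [← Matrix.mulVec_mulVec, Matrix.dotProduct_mulVec, Matrix.vecMul_transpose]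

theorem dot_mulVec_transpose {k : ℕ} (X : Matrix (Fin k) (Fin k) ℝ) (u : Fin k → ℝ) :
    u ⬝ᵥ Xᵀ.mulVec u = u ⬝ᵥ X.mulVec u := by
  simp only [Matrix.mulVec, dotProduct, Matrix.transpose_apply, Finset.mul_sum]
  rw [Finset.sum_comm]
  exact Finset.sum_congr rfl fun i _ => Finset.sum_congr rfl fun j _ => by ring

end Helpers

/-- For a matrix-valued function `M : ℝ → ℝ^{m×n}` differentiable (entrywise) at `θ₀`
with `M(θ₀)` of full column rank, `P(θ) = M(θ)(M(θ)ᵀM(θ))⁻¹M(θ)ᵀ` and `u ∈ ℝ^m`: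
`θ ↦ ‖P(θ)u‖²` is differentiable at `θ₀` with derivative
`2·uᵀ(I - P(θ₀)) M′(θ₀) (M(θ₀)ᵀM(θ₀))⁻¹ M(θ₀)ᵀ u`. -/
theorem deriv_sq_norm_projection {m n : ℕ}
    (M : ℝ → Matrix (Fin m) (Fin n) ℝ) (θ₀ : ℝ)
    (M' : Matrix (Fin m) (Fin n) ℝ)
    (hM : ∀ i j, HasDerivAt (fun θ => M θ i j) (M' i j) θ₀)
    (hrank : (M θ₀).rank = n) (u : Fin m → ℝ) :
    HasDerivAt
      (fun θ => ∑ i, ((M θ * ((M θ)ᵀ * M θ)⁻¹ * (M θ)ᵀ).mulVec u i) ^ 2)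
      (2 * (u ⬝ᵥ ((1 - M θ₀ * ((M θ₀)ᵀ * M θ₀)⁻¹ * (M θ₀)ᵀ) * M' *
          ((M θ₀)ᵀ * M θ₀)⁻¹ * (M θ₀)ᵀ).mulVec u))
      θ₀ := by
  classical
  set A : ℝ → Matrix (Fin n) (Fin n) ℝ := fun θ => (M θ)ᵀ * M θ with hAdef
  set N : ℝ → Matrix (Fin n) (Fin n) ℝ := fun θ => (A θ)⁻¹ with hNdef
  have hMT : ∀ i j, HasDerivAt (fun θ => (M θ)ᵀ i j) (M'ᵀ i j) θ₀ := fun i j => hM j i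
  have hAd : ∀ i j, HasDerivAt (fun θ => A θ i j)
      ((M'ᵀ * M θ₀ + (M θ₀)ᵀ * M') i j) θ₀ := hd_mul hMT hM
  have hAunit : IsUnit (A θ₀) := by
    refine isUnit_of_rank_eq _ ?_
    rw [hAdef]
    simpa [Matrix.rank_transpose_mul_self] using hrank
  have hdetU : IsUnit (A θ₀).det := (Matrix.isUnit_iff_isUnit_det _).mp hAunit
  have hdet0 : (A θ₀).det ≠ 0 := hdetU.ne_zero
  have hNdiff := differentiableAt_inv_entry (fun i j => (hAd i j).differentiableAt) hdet0
  set D : Matrix (Fin n) (Fin n) ℝ := Matrix.of fun i j => deriv (fun θ => N θ i j) θ₀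
    with hDdef
  have hNd : ∀ i j, HasDerivAt (fun θ => N θ i j) (D i j) θ₀ :=
    fun i j => (hNdiff i j).hasDerivAt
  have hdet_cont : ContinuousAt (fun θ => (A θ).det) θ₀ :=
    (differentiableAt_det (fun i j => (hAd i j).differentiableAt)).continuousAt
  have hev : ∀ᶠ θ in nhds θ₀, (A θ).det ≠ 0 := hdet_cont.eventually_ne hdet0
  -- derivative of A * N is zero since A * N = 1 eventually
  have hANd := hd_mul hAd hNd
  have hANconst : (fun θ => A θ * N θ) =ᶠ[nhds θ₀] fun _ => (1 : Matrix (Fin n) (Fin n) ℝ) :=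
    hev.mono fun θ hθ => Matrix.mul_nonsing_inv _ (isUnit_iff_ne_zero.mpr hθ)
  have hzero : (M'ᵀ * M θ₀ + (M θ₀)ᵀ * M') * N θ₀ + A θ₀ * D = 0 := by
    ext i j
    have h1 := hANd i j
    have h2 : HasDerivAt (fun θ => (A θ * N θ) i j) 0 θ₀ := by
      refine (hasDerivAt_const θ₀ ((1 : Matrix (Fin n) (Fin n) ℝ) i j)).congr_of_eventuallyEq ?_
      exact hANconst.mono fun θ hθ => congrFun (congrFun hθ i) j
    have := h1.unique h2
    simpa using this
  have hA'N : A θ₀ * D = -((M'ᵀ * M θ₀ + (M θ₀)ᵀ * M') * N θ₀) := by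
    rw [add_comm] at hzero
    exact (add_eq_zero_iff_eq_neg).mp hzero
  have hDval : D = -(N θ₀ * (M'ᵀ * M θ₀ + (M θ₀)ᵀ * M') * N θ₀) := by
    have h3 : N θ₀ * (A θ₀ * D) = D := by
      rw [← mul_assoc, Matrix.nonsing_inv_mul _ hdetU, one_mul]
    rw [← h3, hA'N]
    noncomm_ring
  -- symmetry facts
  have hAsymm : (A θ₀)ᵀ = A θ₀ := by
    rw [hAdef]
    simp [Matrix.transpose_mul]
  have hNs : (N θ₀)ᵀ = N θ₀ := by
    rw [hNdef]
    simp only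
    rw [Matrix.transpose_nonsing_inv, hAsymm]
  -- derivative of P entries
  have hMN := hd_mul hM hNd
  have hPd := hd_mul hMN hMT
  set P' : Matrix (Fin m) (Fin m) ℝ :=
    (M' * N θ₀ + M θ₀ * D) * (M θ₀)ᵀ + (M θ₀ * N θ₀) * M'ᵀ with hP'def
  have hg : HasDerivAt (fun θ => u ⬝ᵥ (M θ * N θ * (M θ)ᵀ).mulVec u)
      (u ⬝ᵥ P'.mulVec u) θ₀ := by
    simp only [Matrix.mulVec, dotProduct]
    refine HasDerivAt.fun_sum fun i _ => ?_
    exact ((HasDerivAt.fun_sum fun j _ => (hPd i j).mul_const (u j))).const_mul (u i)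
  -- eventual equality of the squared-norm with the quadratic form
  have hfg : (fun θ => ∑ i, ((M θ * N θ * (M θ)ᵀ).mulVec u i) ^ 2)
      =ᶠ[nhds θ₀] fun θ => u ⬝ᵥ (M θ * N θ * (M θ)ᵀ).mulVec u := by
    refine hev.mono fun θ hθ => ?_
    have hdU : IsUnit (A θ).det := isUnit_iff_ne_zero.mpr hθ
    have hAsymmθ : (A θ)ᵀ = A θ := by simp [hAdef, Matrix.transpose_mul]
    have hNsθ : (N θ)ᵀ = N θ := by
      show ((A θ)⁻¹)ᵀ = (A θ)⁻¹
      rw [Matrix.transpose_nonsing_inv, hAsymmθ]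
    have hPs : (M θ * N θ * (M θ)ᵀ)ᵀ = M θ * N θ * (M θ)ᵀ := by
      simp [Matrix.transpose_mul, hNsθ, Matrix.mul_assoc]
    have hPP : (M θ * N θ * (M θ)ᵀ) * (M θ * N θ * (M θ)ᵀ) = M θ * N θ * (M θ)ᵀ := by
      have key : (M θ)ᵀ * (M θ * N θ * (M θ)ᵀ) = (M θ)ᵀ := by
        calc (M θ)ᵀ * (M θ * N θ * (M θ)ᵀ) = (A θ * N θ) * (M θ)ᵀ := by
              simp only [hAdef, Matrix.mul_assoc]
        _ = (M θ)ᵀ := by rw [Matrix.mul_nonsing_inv _ hdU, Matrix.one_mul]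
      calc (M θ * N θ * (M θ)ᵀ) * (M θ * N θ * (M θ)ᵀ)
          = M θ * N θ * ((M θ)ᵀ * (M θ * N θ * (M θ)ᵀ)) := by
            simp only [Matrix.mul_assoc]
        _ = M θ * N θ * (M θ)ᵀ := by rw [key]
    show ∑ i, ((M θ * N θ * (M θ)ᵀ).mulVec u i) ^ 2
        = u ⬝ᵥ (M θ * N θ * (M θ)ᵀ).mulVec u
    set Pm := M θ * N θ * (M θ)ᵀ with hPm
    clear_value Pm
    calc ∑ i, (Pm.mulVec u i) ^ 2 = Pm.mulVec u ⬝ᵥ Pm.mulVec u := by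
          simp [dotProduct, sq]
      _ = u ⬝ᵥ (Pmᵀ * Pm).mulVec u := (dot_gram Pm u).symm
      _ = u ⬝ᵥ Pm.mulVec u := by rw [hPs, hPP]
  have hmain : HasDerivAt (fun θ => ∑ i, ((M θ * N θ * (M θ)ᵀ).mulVec u i) ^ 2)
      (u ⬝ᵥ P'.mulVec u) θ₀ := hg.congr_of_eventuallyEq hfg
  -- identify the derivative value
  have hQ : P' = ((1 - M θ₀ * N θ₀ * (M θ₀)ᵀ) * M' * N θ₀ * (M θ₀)ᵀ)
      + ((1 - M θ₀ * N θ₀ * (M θ₀)ᵀ) * M' * N θ₀ * (M θ₀)ᵀ)ᵀ := by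
    rw [hP'def, hDval]
    simp only [Matrix.transpose_mul, Matrix.transpose_sub, Matrix.transpose_one,
      Matrix.transpose_transpose, hNs, Matrix.sub_mul, Matrix.mul_sub, Matrix.add_mul,
      Matrix.mul_add, Matrix.neg_mul, Matrix.mul_neg, Matrix.mul_assoc, Matrix.one_mul,
      Matrix.mul_one]
    abel
  have hval : u ⬝ᵥ P'.mulVec u
      = 2 * (u ⬝ᵥ ((1 - M θ₀ * N θ₀ * (M θ₀)ᵀ) * M' * N θ₀ * (M θ₀)ᵀ).mulVec u) := by
    rw [hQ, Matrix.add_mulVec, dotProduct_add, dot_mulVec_transpose]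
    ring
  rw [← hval]
  exact hmain
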